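/- Fix a set C of colors and a strict weak order ≺ on C^ω that is not regular-Mont. Then there exists a one-player game on a finite graph, all of whose vertices belong to a player a with preference ≺, such that for every m ∈ ℕ there is a run ρ for which player a has a winning strategy in the threshold game g_{a,ρ} but has no winning strategy in g_{a,ρ} using m bits of memory (and likewise for the non-strict threshold game for a and ρ). -/

import Mathlib

namespace GG

variable {V C A : Type}

/-- Append a finite list in front of an infinite sequence. -/
def appSeq (l : List V) (ρ : ℕ → V) : ℕ → V :=
  fun n => if n < l.length then l.getD n (ρ 0) else ρ (n - l.length)

/-- Glue two histories, identifying the last vertex of `l` with the first of `l'`. -/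
def glueL (l l' : List V) : List V := l.dropLast ++ l'

/-- Glue a history with a run, identifying the last vertex of `l` with the start of `ρ`. -/
def glueR (l : List V) (ρ : ℕ → V) : ℕ → V := appSeq l.dropLast ρ

/-- Ultimately periodic (regular) sequence. -/
def UltPeriodic (ρ : ℕ → V) : Prop := ∃ k p : ℕ, 0 < p ∧ ∀ n, k ≤ n → ρ (n + p) = ρ n

/-- Strict weak order: irreflexive, transitive, with transitive incomparability. -/
def SWO (r : (ℕ → C) → (ℕ → C) → Prop) : Prop :=
  (∀ x, ¬ r x x) ∧ (∀ x y z, r x y → r y z → r x z) ∧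
    (∀ x y z, ¬ r x y → ¬ r y z → ¬ r x z)

/-- A strategy uses `m` bits of memory: it is induced by a strategic update
`σ : V × {0,1}^m → V × {0,1}^m` together with an initial memory content. -/
def UsesMem (m : ℕ) (s : List V → V) : Prop :=
  ∃ (σ : V × (Fin m → Bool) → V × (Fin m → Bool)) (M₀ : Fin m → Bool),
    ∀ (l : List V) (v : V),
      s (l ++ [v]) = (σ (v, l.foldl (fun M u => (σ (u, M)).2) M₀)).1

/-- A finite-memory strategy. -/
def FinMem (s : List V → V) : Prop := ∃ m, UsesMem m s

/-- Regular language: recognized by a deterministic finite automaton. -/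
def RegLang {α : Type} (L : Set (List α)) : Prop :=
  ∃ (Q : Type) (_ : Fintype Q) (step : Q → α → Q) (init : Q) (acc : Set Q),
    ∀ w : List α, w ∈ L ↔ w.foldl step init ∈ acc

/-- Repeat a finite word `n` times. -/
def repW (l : List C) (n : ℕ) : List C := (List.replicate n l).flatten

/-- The infinite word `u · w^ω` (with default letter `d`, unused when `w ≠ []`). -/
def extWord (d : C) (u w : List C) : ℕ → C := fun n =>
  if n < u.length then u.getD n d else w.getD ((n - u.length) % w.length) d

/-- The regular-Mont condition for a preference on infinite color sequences. -/
def RegularMont (prec : (ℕ → C) → (ℕ → C) → Prop) : Prop :=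
  ∀ (d : C) (h₀ h₁ h₂ h₃ : List C), h₁ ≠ [] → h₃ ≠ [] →
    (∀ n : ℕ, prec (extWord d (h₀ ++ repW h₁ n ++ h₂) h₃)
        (extWord d (h₀ ++ repW h₁ (n + 1) ++ h₂) h₃)) →
    prec (extWord d (h₀ ++ h₂) h₃) (extWord d h₀ h₁)

/-- The weak optimality-is-regular property of a preference. -/
def WeakOIR (prec : (ℕ → C) → (ℕ → C) → Prop) : Prop :=
  ∀ p q : ℕ → C, UltPeriodic p → UltPeriodic q →
    ∃ M : Set (List C), RegLang M ∧ ∀ h : List C, h ∈ M ↔ prec (appSeq h p) (appSeq h q)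

/-- Automatic-piecewise prefix-linearity of a preference on `C^ω` (word level). -/
def APPLword (prec : (ℕ → C) → (ℕ → C) → Prop) : Prop :=
  ∃ (Q : Type) (_ : Fintype Q) (step : Q → C → Q) (init : Q),
    ∀ h h' : List C, h.foldl step init = h'.foldl step init →
      ∀ p q : ℕ → C,
        (prec (appSeq h p) (appSeq h q) ↔ prec (appSeq h' p) (appSeq h' q))

/-- A multi-player game played on a finite directed graph in which every
vertex has an outgoing edge. Players compare runs via color traces. -/
structure Game (V C A : Type) where
  edge : V → V → Prop
  serial : ∀ v, ∃ w, edge v w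
  start : V
  owner : V → A
  color : V → C
  pref : A → (ℕ → C) → (ℕ → C) → Prop

/-- Shifted strategy `s^h`. -/
def shiftStrat (l : List V) (s : List V → V) : List V → V :=
  fun l' => s (l.dropLast ++ l')

namespace Game

variable (g : Game V C A)

def lastV (l : List V) : V := l.getLast?.getD g.start

/-- Histories: finite paths starting at the start vertex. -/
def IsHist (l : List V) : Prop :=
  l ≠ [] ∧ l.head? = some g.start ∧ l.Chain' g.edge

/-- Runs: infinite paths starting at the start vertex. -/
def IsRun (ρ : ℕ → V) : Prop :=
  ρ 0 = g.start ∧ ∀ n, g.edge (ρ n) (ρ (n + 1))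

/-- Runs are compared via their color traces. -/
def runPref (a : A) (ρ ρ' : ℕ → V) : Prop :=
  g.pref a (fun n => g.color (ρ n)) (fun n => g.color (ρ' n))

/-- Validity of a strategy on the set `P` of controlled vertices. -/
def ValidOn (P : V → Prop) (s : List V → V) : Prop :=
  ∀ l, g.IsHist l → P (g.lastV l) → g.edge (g.lastV l) (s l)

def ValidStrat (a : A) (s : List V → V) : Prop :=
  g.ValidOn (fun v => g.owner v = a) s

/-- Validity for the coalition of all players other than `a`. -/
def ValidCo (a : A) (s : List V → V) : Prop :=
  g.ValidOn (fun v => g.owner v ≠ a) s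

def _root_.GG.histUpTo (ρ : ℕ → V) (n : ℕ) : List V := (List.range (n + 1)).map ρ

def _root_.GG.CompatOn (P : V → Prop) (s : List V → V) (ρ : ℕ → V) : Prop :=
  ∀ n, P (ρ n) → ρ (n + 1) = s (GG.histUpTo ρ n)

/-- A run is compatible with a strategy of player `a`. -/
def Compat (a : A) (s : List V → V) (ρ : ℕ → V) : Prop :=
  GG.CompatOn (fun v => g.owner v = a) s ρ

def CompatCo (a : A) (s : List V → V) (ρ : ℕ → V) : Prop :=
  GG.CompatOn (fun v => g.owner v ≠ a) s ρ

/-- `s` is a winning strategy of Player 1 (= player `a`) in the threshold game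
`g_{a,ρ}`: every compatible run is strictly preferred to `ρ`. -/
def Wins1 (a : A) (ρ : ℕ → V) (s : List V → V) : Prop :=
  g.ValidStrat a s ∧ ∀ ρ', g.IsRun ρ' → g.Compat a s ρ' → g.runPref a ρ ρ'

/-- `s` is a winning strategy of Player 2 (the coalition) in the threshold game `g_{a,ρ}`. -/
def Wins2 (a : A) (ρ : ℕ → V) (s : List V → V) : Prop :=
  g.ValidCo a s ∧ ∀ ρ', g.IsRun ρ' → g.CompatCo a s ρ' → ¬ g.runPref a ρ ρ'

/-- Player 1 wins the non-strict threshold game for `a` and `ρ` with `s`. -/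
def Wins1NS (a : A) (ρ : ℕ → V) (s : List V → V) : Prop :=
  g.ValidStrat a s ∧ ∀ ρ', g.IsRun ρ' → g.Compat a s ρ' → ¬ g.runPref a ρ' ρ

/-- Player 2 wins the non-strict threshold game for `a` and `ρ` with `s`. -/
def Wins2NS (a : A) (ρ : ℕ → V) (s : List V → V) : Prop :=
  g.ValidCo a s ∧ ∀ ρ', g.IsRun ρ' → g.CompatCo a s ρ' → g.runPref a ρ' ρ

/-- The future game `g^h` after history `l`. -/
def future (l : List V) : Game V C A where
  edge := g.edge
  serial := g.serial
  start := g.lastV l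
  owner := g.owner
  color := g.color
  pref := fun a p q =>
    g.pref a (appSeq (l.dropLast.map g.color) p) (appSeq (l.dropLast.map g.color) q)

/-- The guarantee `γ_a(s)` of a strategy. -/
def gam (a : A) (s : List V → V) : Set (ℕ → V) :=
  {ρ | g.IsRun ρ ∧ ∃ ρ', g.IsRun ρ' ∧ g.Compat a s ρ' ∧ ¬ g.runPref a ρ ρ'}

/-- The best guarantee `Γ_a`. -/
def Gam (a : A) : Set (ℕ → V) :=
  ⋂ s ∈ {s : List V → V | g.ValidStrat a s}, g.gam a s

def Optimal (a : A) (s : List V → V) : Prop := g.gam a s = g.Gam a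

def OptimalAt (a : A) (s : List V → V) (l : List V) : Prop :=
  (g.future l).Optimal a (shiftStrat l s)

def SubgameOptimal (a : A) (s : List V → V) : Prop :=
  ∀ l, g.IsHist l → g.OptimalAt a s l

/-- A history is compatible with a strategy of player `a`. -/
def HistCompat (a : A) (s : List V → V) (l : List V) : Prop :=
  ∀ i : ℕ, i + 1 < l.length → g.owner (l.getD i g.start) = a →
    l.getD (i + 1) g.start = s (l.take (i + 1))

def ConsistentOptimal (a : A) (s : List V → V) : Prop :=
  ∀ l, g.IsHist l → g.HistCompat a s l → g.OptimalAt a s l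

/-- The history of the play induced by a strategy profile, up to stage `n`. -/
def playHist (prof : A → List V → V) : ℕ → List V
  | 0 => [g.start]
  | n + 1 =>
      playHist prof n ++
        [prof (g.owner (g.lastV (playHist prof n))) (playHist prof n)]

/-- The run induced by a strategy profile. -/
def play (prof : A → List V → V) : ℕ → V := fun n => g.lastV (g.playHist prof n)

/-- Nash equilibrium. -/
def IsNash [DecidableEq A] (prof : A → List V → V) : Prop :=
  (∀ a, g.ValidStrat a (prof a)) ∧
    ∀ a s', g.ValidStrat a s' →
      ¬ g.runPref a (g.play prof) (g.play (Function.update prof a s'))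

/-- Optimality of the strategy `s` of player `a` is regular using `D` bits. -/
def OptRegBits (a : A) (s : List V → V) (D : ℕ) : Prop :=
  ∃ (Q : Type) (_ : Fintype Q) (step : Q → V → Q) (init : Q) (acc : Set Q),
    Fintype.card Q ≤ 2 ^ D ∧
      ∀ l, g.IsHist l → (l.foldl step init ∈ acc ↔ g.OptimalAt a s l)

/-- Player `a` has the optimality-is-regular property in `g`. -/
def OIR (a : A) : Prop :=
  ∀ s, g.ValidStrat a s → FinMem s →
    ∃ (Q : Type) (_ : Fintype Q) (step : Q → V → Q) (init : Q) (acc : Set Q),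
      ∀ l, g.IsHist l → (l.foldl step init ∈ acc ↔ g.OptimalAt a s l)

/-- The two-player antagonistic game associated to player `a`: Player `true`
controls `V_a` with preference `≺_a`, Player `false` the remaining vertices
with the inverse preference. -/
def anta [DecidableEq A] (a : A) : Game V C Bool where
  edge := g.edge
  serial := g.serial
  start := g.start
  owner := fun v => decide (g.owner v = a)
  color := g.color
  pref := fun p x y => if p = true then g.pref a x y else g.pref a y x

/-- The cumulative glued histories `h₀⌢h₁⌢…⌢h_n`. -/
def _root_.GG.cumul (h₀ : List V) (hs : ℕ → List V) : ℕ → List V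
  | 0 => h₀
  | n + 1 => glueL (GG.cumul h₀ hs n) (hs n)

/-- The preference of player `a` is Mont in `g`. -/
def MontPref (a : A) : Prop :=
  ∀ (h₀ : List V) (ρ : ℕ → V) (hs : ℕ → List V),
    g.IsHist h₀ → UltPeriodic ρ →
    (∀ n, g.IsRun (glueR (GG.cumul h₀ hs n) ρ)) →
    (∀ n, g.runPref a (glueR (GG.cumul h₀ hs n) ρ) (glueR (GG.cumul h₀ hs (n + 1)) ρ)) →
    ∀ lim : ℕ → V,
      (∀ n k, k < (GG.cumul h₀ hs n).dropLast.length →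
        lim k = (GG.cumul h₀ hs n).dropLast.getD k g.start) →
      (∀ N, ∃ n, N < (GG.cumul h₀ hs n).dropLast.length) →
      g.runPref a (glueR h₀ ρ) lim

/-- Player `a`'s preference is automatic-piecewise prefix-linear in `g`. -/
def APPLin (a : A) : Prop :=
  ∃ (Q : Type) (_ : Fintype Q) (step : Q → V → Q) (init : Q),
    ∀ h h', g.IsHist h → g.IsHist h' →
      h.foldl step init = h'.foldl step init →
      g.lastV h = g.lastV h' ∧
        ∀ ρ ρ' : ℕ → V,
          g.IsRun (glueR h ρ) → g.IsRun (glueR h ρ') →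
          g.IsRun (glueR h' ρ) → g.IsRun (glueR h' ρ') →
          (g.runPref a (glueR h ρ) (glueR h ρ') ↔ g.runPref a (glueR h' ρ) (glueR h' ρ'))

end Game

end GG

open GG


namespace S10

def TT (a b c e : ℕ) : ℕ := a + b + c + e

def posZ (a b t : ℕ) : ℕ := if t < a then t else a + (t - a) % b

def posY (a b c e k t : ℕ) : ℕ :=
  if t < a + k * b then posZ a b t
  else if t - (a + k * b) < c then a + b + (t - (a + k * b))
  else a + b + c + (t - (a + k * b) - c) % e

def edgeN (a b c e v w : ℕ) : Prop :=
  (w = v + 1 ∧ v + 1 < TT a b c e) ∨ (v = a + b - 1 ∧ w = a) ∨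
    (v = TT a b c e - 1 ∧ w = a + b + c)

def nxtN (a b c e v : ℕ) : ℕ :=
  if v = a + b - 1 then a else if v = TT a b c e - 1 then a + b + c else v + 1

variable {a b c e : ℕ}

lemma mod_succ_ne (hb : 0 < b) {x : ℕ} (h : x % b + 1 ≠ b) : (x + 1) % b = x % b + 1 := by
  have h1 : x % b < b := Nat.mod_lt _ hb
  have hd := Nat.div_add_mod x b
  have hmc : b * (x / b) = x / b * b := Nat.mul_comm _ _
  have h2 : x + 1 = x % b + 1 + x / b * b := by omega
  rw [h2, Nat.add_mul_mod_self_right]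
  exact Nat.mod_eq_of_lt (by omega)

lemma mod_succ_eq (hb : 0 < b) {x : ℕ} (h : x % b + 1 = b) : (x + 1) % b = 0 := by
  have hd := Nat.div_add_mod x b
  have hmc : b * (x / b) = x / b * b := Nat.mul_comm _ _
  have h2 : (x / b + 1) * b = x / b * b + b := Nat.succ_mul _ _
  have h3 : x + 1 = (x / b + 1) * b := by omega
  rw [h3, Nat.mul_mod_left]

lemma kbpos {a b k : ℕ} (hb : 0 < b) (hk : 0 < k) : 0 < a + k * b := by
  have : 1 * 1 ≤ k * b := Nat.mul_le_mul hk hb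
  omega

lemma posZ_lt (hb : 0 < b) (t : ℕ) : posZ a b t < a + b := by
  unfold posZ
  split
  · omega
  · have := Nat.mod_lt (t - a) hb; omega

lemma posZ_zero : posZ a b 0 = 0 := by
  unfold posZ
  rcases Nat.eq_zero_or_pos a with h | h
  · rw [if_neg (by omega), h]
    simp
  · rw [if_pos h]

lemma nxt_posZ (hb : 0 < b) (he : 0 < e) (t : ℕ) :
    nxtN a b c e (posZ a b t) = posZ a b (t + 1) := by
  have hlt := posZ_lt (a := a) hb t
  have hT : a + b ≤ TT a b c e - 1 := by unfold TT; omega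
  unfold nxtN
  rcases Nat.lt_or_ge (t + 1) a with h1 | h1
  · have hz : posZ a b t = t := by unfold posZ; rw [if_pos (by omega)]
    have hz2 : posZ a b (t + 1) = t + 1 := by unfold posZ; rw [if_pos h1]
    rw [hz, hz2, if_neg (by omega), if_neg (by omega)]
  · rcases Nat.lt_or_ge t a with h2 | h2
    · -- t = a - 1, t + 1 = a
      have hz : posZ a b t = t := by unfold posZ; rw [if_pos h2]
      have hz2 : posZ a b (t + 1) = a + (t + 1 - a) % b := by
        unfold posZ; rw [if_neg (by omega)]
      have h3 : t + 1 - a = 0 := by omega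
      rw [hz, hz2, h3, Nat.zero_mod, if_neg (by omega), if_neg (by omega)]
      omega
    · -- t ≥ a
      have hz : posZ a b t = a + (t - a) % b := by unfold posZ; rw [if_neg (by omega)]
      have hz2 : posZ a b (t + 1) = a + (t + 1 - a) % b := by
        unfold posZ; rw [if_neg (by omega)]
      have hts : t + 1 - a = (t - a) + 1 := by omega
      have hmlt : (t - a) % b < b := Nat.mod_lt _ hb
      rw [hz, hz2, hts]
      by_cases hm : (t - a) % b + 1 = b
      · rw [mod_succ_eq hb hm, if_pos (by omega)]
        omega
      · rw [mod_succ_ne hb hm, if_neg (by omega), if_neg (by omega)]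
        omega

lemma posY_eq_posZ {k t : ℕ} (h : t < a + k * b) : posY a b c e k t = posZ a b t := by
  unfold posY; rw [if_pos h]

lemma posY_zero {k : ℕ} (hk : 0 < a + k * b) : posY a b c e k 0 = 0 := by
  rw [posY_eq_posZ hk, posZ_zero]

lemma posY_lt (hb : 0 < b) (he : 0 < e) (t k : ℕ) : posY a b c e k t < TT a b c e := by
  unfold posY TT
  split
  · have := posZ_lt (a := a) hb t; omega
  · split
    · omega
    · have := Nat.mod_lt (t - (a + k * b) - c) he; omega

lemma posY_tail_ge {k t : ℕ} (h : a + k * b ≤ t) : a + b ≤ posY a b c e k t := by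
  unfold posY
  rw [if_neg (by omega)]
  split <;> omega

lemma posY_exit {k : ℕ} : posY a b c e k (a + k * b) = a + b := by
  unfold posY
  rw [if_neg (by omega)]
  rw [Nat.sub_self]
  rcases Nat.eq_zero_or_pos c with hc | hc
  · rw [if_neg (by omega)]
    simp [hc]
  · rw [if_pos (by omega)]
    omega

lemma posZ_visit (hb : 0 < b) {i : ℕ} :
    posZ a b (a + i * b + (b - 1)) = a + b - 1 := by
  unfold posZ
  rw [if_neg (by omega)]
  have ht : a + i * b + (b - 1) - a = b - 1 + i * b := by omega
  rw [ht, Nat.add_mul_mod_self_right, Nat.mod_eq_of_lt (by omega)]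
  omega

lemma posY_visit (hb : 0 < b) {k i : ℕ} (hik : i < k) :
    posY a b c e k (a + i * b + (b - 1)) = a + b - 1 := by
  have hm : (i + 1) * b ≤ k * b := Nat.mul_le_mul_right b (by omega)
  have hm2 : (i + 1) * b = i * b + b := Nat.succ_mul _ _
  have h1 : a + i * b + (b - 1) < a + k * b := by omega
  rw [posY_eq_posZ h1, posZ_visit hb]

lemma posY_exit_pred (hb : 0 < b) {k : ℕ} (hk : 0 < k) :
    posY a b c e k (a + k * b - 1) = a + b - 1 := by
  obtain ⟨j, rfl⟩ : ∃ j, k = j + 1 := ⟨k - 1, by omega⟩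
  have hm2 : (j + 1) * b = j * b + b := Nat.succ_mul _ _
  have h1 : a + (j + 1) * b - 1 = a + j * b + (b - 1) := by omega
  rw [h1, posY_visit hb (by omega)]

lemma nxt_posY (hb : 0 < b) (he : 0 < e) {k t : ℕ} (hk : 0 < k) (ht : t + 1 ≠ a + k * b) :
    nxtN a b c e (posY a b c e k t) = posY a b c e k (t + 1) := by
  rcases Nat.lt_or_ge (t + 1) (a + k * b) with h1 | h1
  · rw [posY_eq_posZ (by omega), posY_eq_posZ h1, nxt_posZ hb he]
  · have ht2 : a + k * b ≤ t := by omega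
    set u := t - (a + k * b) with hu
    have hu1 : t + 1 - (a + k * b) = u + 1 := by omega
    rcases Nat.lt_or_ge u c with huc | huc
    · have hYt : posY a b c e k t = a + b + u := by
        unfold posY; rw [if_neg (by omega), if_pos huc]
      rcases Nat.lt_or_ge (u + 1) c with h | h
      · have hYt1 : posY a b c e k (t + 1) = a + b + (u + 1) := by
          unfold posY; rw [if_neg (by omega), hu1, if_pos h]
        rw [hYt, hYt1]
        unfold nxtN TT
        rw [if_neg (by omega), if_neg (by omega)]
        omega
      · have hc : u + 1 = c := by omega
        have hYt1 : posY a b c e k (t + 1) = a + b + c := by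
          unfold posY
          rw [if_neg (by omega), hu1, if_neg (by omega), hc, Nat.sub_self, Nat.zero_mod]
          omega
        rw [hYt, hYt1]
        unfold nxtN TT
        rw [if_neg (by omega), if_neg (by omega)]
        omega
    · have hrlt : (u - c) % e < e := Nat.mod_lt _ he
      have hYt : posY a b c e k t = a + b + c + (u - c) % e := by
        unfold posY; rw [if_neg (by omega), if_neg (by omega)]
      have hs : u + 1 - c = (u - c) + 1 := by omega
      by_cases hre : (u - c) % e + 1 = e
      · have hYt1 : posY a b c e k (t + 1) = a + b + c := by
          unfold posY
          rw [if_neg (by omega), hu1, if_neg (by omega), hs, mod_succ_eq he hre]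
          omega
        rw [hYt, hYt1]
        unfold nxtN TT
        rw [if_neg (by omega), if_pos (by omega)]
      · have hYt1 : posY a b c e k (t + 1) = a + b + c + ((u - c) % e + 1) := by
          unfold posY
          rw [if_neg (by omega), hu1, if_neg (by omega), hs, mod_succ_ne he hre]
        rw [hYt, hYt1]
        unfold nxtN TT
        rw [if_neg (by omega), if_neg (by omega)]
        omega

lemma edge_nxt {v : ℕ} (hv : v < TT a b c e) :
    edgeN a b c e v (nxtN a b c e v) := by
  unfold edgeN nxtN TT at *
  by_cases h1 : v = a + b - 1
  · rw [if_pos h1]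
    right; left; exact ⟨h1, rfl⟩
  · rw [if_neg h1]
    by_cases h2 : v = a + b + c + e - 1
    · rw [if_pos h2]
      right; right; exact ⟨h2, rfl⟩
    · rw [if_neg h2]
      left; exact ⟨rfl, by omega⟩

lemma nxt_lt {v : ℕ} (hb : 0 < b) (he : 0 < e) (hv : v < TT a b c e) :
    nxtN a b c e v < TT a b c e := by
  unfold TT at hv
  unfold nxtN TT
  split
  · omega
  · split <;> omega

lemma edge_exit (hb : 0 < b) (he : 0 < e) : edgeN a b c e (a + b - 1) (a + b) := by
  left
  constructor
  · omega
  · unfold TT; omega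

/-- Classification of runs in the graph. -/
lemma run_classify (hb : 0 < b) (he : 0 < e) (ρ : ℕ → ℕ) (h0 : ρ 0 = 0)
    (hedge : ∀ t, edgeN a b c e (ρ t) (ρ (t + 1))) :
    (∀ t, ρ t = posZ a b t) ∨ ∃ k, 0 < k ∧ ∀ t, ρ t = posY a b c e k t := by
  have hT1 : a + b ≤ TT a b c e - 1 := by unfold TT; omega
  have subA : ∀ t, (∀ s, s ≤ t → ρ s ≠ a + b) → ρ t = posZ a b t := by
    intro t
    induction t with
    | zero => intro _; rw [h0, posZ_zero]
    | succ t ih =>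
      intro hne
      have hzt : ρ t = posZ a b t := ih (fun s hs => hne s (by omega))
      have hplt := posZ_lt (a := a) hb t
      have he1 := hedge t
      rw [hzt] at he1
      rcases he1 with ⟨hw, _⟩ | ⟨hv, hw⟩ | ⟨hv, _⟩
      · have hvc : posZ a b t ≠ a + b - 1 := by
          intro hc
          apply hne (t + 1) le_rfl
          omega
        rw [hw, ← nxt_posZ (a := a) (c := c) (e := e) hb he t]
        unfold nxtN
        rw [if_neg hvc, if_neg (by omega)]
      · rw [hw, ← nxt_posZ (a := a) (c := c) (e := e) hb he t]
        unfold nxtN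
        rw [if_pos hv]
      · omega
  by_cases hex : ∃ t, ρ t = a + b
  · right
    classical
    obtain ⟨t0, ht0, ht0min⟩ : ∃ t0, ρ t0 = a + b ∧ ∀ s, s < t0 → ρ s ≠ a + b :=
      ⟨Nat.find hex, Nat.find_spec hex, fun s hs => Nat.find_min hex hs⟩
    have ht0pos : 0 < t0 := by
      rcases Nat.eq_zero_or_pos t0 with h | h
      · rw [h] at ht0; omega
      · exact h
    have hpre : ∀ s, s < t0 → ρ s = posZ a b s := by
      intro s hs
      exact subA s (fun u hu => ht0min u (by omega))
    obtain ⟨t1, ht1⟩ : ∃ t1, t0 = t1 + 1 := ⟨t0 - 1, by omega⟩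
    have hz1 : ρ t1 = posZ a b t1 := hpre t1 (by omega)
    have hedge1 := hedge t1
    rw [hz1, ← ht1, ht0] at hedge1
    have hplt := posZ_lt (a := a) hb t1
    have hvc : posZ a b t1 = a + b - 1 := by
      rcases hedge1 with ⟨hw, _⟩ | ⟨hv, hw⟩ | ⟨hv, _⟩
      · omega
      · omega
      · omega
    have ht1a : a ≤ t1 ∧ (t1 - a) % b = b - 1 := by
      unfold posZ at hvc
      rcases Nat.lt_or_ge t1 a with h | h
      · rw [if_pos h] at hvc; omega
      · rw [if_neg (by omega)] at hvc
        exact ⟨h, by omega⟩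
    have hdm := Nat.div_add_mod (t1 - a) b
    obtain ⟨q, hdm⟩ : ∃ q, b * q + (t1 - a) % b = t1 - a := ⟨(t1 - a) / b, hdm⟩
    have hqb : (q + 1) * b = q * b + b := Nat.succ_mul _ _
    have hqb3 : b * q = q * b := Nat.mul_comm _ _
    have ht0eq : t0 = a + (q + 1) * b := by omega
    refine ⟨q + 1, by omega, ?_⟩
    have htail : ∀ s, ρ (t0 + s) = posY a b c e (q + 1) (t0 + s) := by
      intro s
      induction s with
      | zero =>
        have := posY_exit (a := a) (b := b) (c := c) (e := e) (k := q + 1)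
        rw [Nat.add_zero, ht0, ht0eq, this]
      | succ s ih =>
        have hedge2 := hedge (t0 + s)
        rw [ih] at hedge2
        have hge : a + b ≤ posY a b c e (q + 1) (t0 + s) := by
          rw [ht0eq]
          exact posY_tail_ge (by omega)
        have key : ρ (t0 + s + 1) = nxtN a b c e (posY a b c e (q + 1) (t0 + s)) := by
          rcases hedge2 with ⟨hw, hlt⟩ | ⟨hv, _⟩ | ⟨hv, hw⟩
          · rw [hw]
            unfold nxtN
            rw [if_neg (by omega), if_neg (by unfold TT at *; omega)]
          · omega
          · rw [hw]
            unfold nxtN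
            rw [if_neg (by omega), if_pos hv]
        have harr : t0 + (s + 1) = t0 + s + 1 := by omega
        rw [harr, key, nxt_posY hb he (by omega) (by omega)]
    intro t
    rcases Nat.lt_or_ge t t0 with h | h
    · rw [hpre t h]
      exact (posY_eq_posZ (by omega)).symm
    · obtain ⟨s, rfl⟩ : ∃ s, t = t0 + s := ⟨t - t0, by omega⟩
      exact htail s
  · left
    intro t
    exact subA t (fun s _ hc => hex ⟨s, hc⟩)

end S10


namespace S10
section Words

variable {C : Type} (d : C) (h0 h1 h2 h3 : List C)

lemma repW_succ (l : List C) (k : ℕ) : GG.repW l (k + 1) = l ++ GG.repW l k := by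
  unfold GG.repW
  rw [List.replicate_succ, List.flatten_cons]

lemma repW_zero (l : List C) : GG.repW l 0 = [] := by
  unfold GG.repW
  simp

lemma repW_length (l : List C) (k : ℕ) : (GG.repW l k).length = k * l.length := by
  induction k with
  | zero => rw [repW_zero]; simp
  | succ k ih =>
    rw [repW_succ, List.length_append, ih, Nat.succ_mul]
    omega

lemma repW_getD (l : List C) {k i : ℕ} (h : i < k * l.length) :
    (GG.repW l k).getD i d = l.getD (i % l.length) d := by
  have hl : 0 < l.length := by
    rcases Nat.eq_zero_or_pos l.length with h' | h'
    · rw [h'] at h; omega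
    · exact h'
  induction k generalizing i with
  | zero => omega
  | succ k ih =>
    rw [repW_succ]
    rcases Nat.lt_or_ge i l.length with h1 | h1
    · rw [List.getD_append _ _ _ _ h1, Nat.mod_eq_of_lt h1]
    · have hsm : (k + 1) * l.length = k * l.length + l.length := Nat.succ_mul _ _
      rw [List.getD_append_right _ _ _ _ h1, ih (by omega)]
      congr 1
      conv_rhs => rw [show i = (i - l.length) + l.length by omega]
      rw [Nat.add_mod_right]

end Words

section Trace

variable {C : Type} (d : C) (h0 h1 h2 h3 : List C)

local notation "a'" => h0.length
local notation "b'" => h1.length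
local notation "c'" => h2.length
local notation "e'" => h3.length

def fullL : List C := h0 ++ h1 ++ h2 ++ h3

lemma full_getD0 {v : ℕ} (h : v < a') :
    (fullL h0 h1 h2 h3).getD v d = h0.getD v d := by
  unfold fullL
  rw [List.getD_append _ _ _ _ (by simp; omega),
    List.getD_append _ _ _ _ (by simp; omega),
    List.getD_append _ _ _ _ h]

lemma full_getD1 {v : ℕ} (h : v < b') :
    (fullL h0 h1 h2 h3).getD (a' + v) d = h1.getD v d := by
  unfold fullL
  rw [List.getD_append _ _ _ _ (by simp; omega),
    List.getD_append _ _ _ _ (by simp; omega),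
    List.getD_append_right _ _ _ _ (by omega)]
  congr 1
  omega

lemma full_getD2 {v : ℕ} (h : v < c') :
    (fullL h0 h1 h2 h3).getD (a' + b' + v) d = h2.getD v d := by
  unfold fullL
  rw [List.getD_append _ _ _ _ (by simp only [List.length_append]; try omega),
    List.getD_append_right _ _ _ _ (by simp only [List.length_append]; try omega)]
  congr 1
  simp only [List.length_append]
  try omega

lemma full_getD3 {v : ℕ} (h : v < e') :
    (fullL h0 h1 h2 h3).getD (a' + b' + c' + v) d = h3.getD v d := by
  unfold fullL
  rw [List.getD_append_right _ _ _ _ (by simp; omega)]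
  congr 1
  simp only [List.length_append]
  omega

lemma traceZ (hb : 0 < b') (t : ℕ) :
    (fullL h0 h1 h2 h3).getD (posZ a' b' t) d = GG.extWord d h0 h1 t := by
  unfold posZ GG.extWord
  rcases Nat.lt_or_ge t a' with h | h
  · rw [if_pos h, if_pos h, full_getD0 d h0 h1 h2 h3 h]
  · have hm : (t - a') % b' < b' := Nat.mod_lt _ hb
    rw [if_neg (by omega), if_neg (by omega), full_getD1 d h0 h1 h2 h3 hm]

lemma prefixY_length (k : ℕ) :
    (h0 ++ GG.repW h1 k ++ h2).length = a' + k * b' + c' := by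
  simp only [List.length_append, repW_length]

lemma traceY (hb : 0 < b') (he : 0 < e') (k t : ℕ) :
    (fullL h0 h1 h2 h3).getD (posY a' b' c' e' k t) d =
      GG.extWord d (h0 ++ GG.repW h1 k ++ h2) h3 t := by
  have hPlen := prefixY_length h0 h1 h2 k
  unfold GG.extWord
  rcases Nat.lt_or_ge t (a' + k * b') with h1' | h1'
  · rw [posY_eq_posZ h1']
    rw [if_pos (by omega)]
    rcases Nat.lt_or_ge t a' with h2' | h2'
    · have hz : posZ a' b' t = t := by unfold posZ; rw [if_pos h2']
      rw [hz, full_getD0 d h0 h1 h2 h3 h2',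
        List.getD_append _ _ _ _ (by simp only [List.length_append, repW_length]; omega),
        List.getD_append _ _ _ _ (by omega)]
    · have hm : (t - a') % b' < b' := Nat.mod_lt _ hb
      have hz : posZ a' b' t = a' + (t - a') % b' := by unfold posZ; rw [if_neg (by omega)]
      rw [hz, full_getD1 d h0 h1 h2 h3 hm,
        List.getD_append _ _ _ _ (by simp only [List.length_append, repW_length]; omega),
        List.getD_append_right _ _ _ _ (by omega),
        repW_getD d h1 (by omega)]
  · set u := t - (a' + k * b') with hu
    rcases Nat.lt_or_ge u c' with huc | huc
    · have hy : posY a' b' c' e' k t = a' + b' + u := by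
        unfold posY; rw [if_neg (by omega), if_pos huc]
      rw [hy, full_getD2 d h0 h1 h2 h3 huc, if_pos (by omega),
        List.getD_append_right _ _ _ _ (by simp only [List.length_append, repW_length]; omega)]
      congr 1
      simp only [List.length_append, repW_length]
      try omega
    · have hrm : (u - c') % e' < e' := Nat.mod_lt _ he
      have hy : posY a' b' c' e' k t = a' + b' + c' + (u - c') % e' := by
        unfold posY; rw [if_neg (by omega), if_neg (by omega)]
      rw [hy, full_getD3 d h0 h1 h2 h3 hrm, if_neg (by omega)]
      have harg : t - (h0 ++ GG.repW h1 k ++ h2).length = u - c' := by rw [hPlen]; omega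
      rw [harg]

end Trace

end S10


section GenericGame

open GG

variable {V C A : Type}

lemma histUpTo_zero (ρ : ℕ → V) : GG.histUpTo ρ 0 = [ρ 0] := by
  simp [GG.histUpTo, List.range_succ]

lemma histUpTo_succ (ρ : ℕ → V) (n : ℕ) :
    GG.histUpTo ρ (n + 1) = GG.histUpTo ρ n ++ [ρ (n + 1)] := by
  unfold GG.histUpTo
  rw [List.range_succ, List.map_append]
  rfl

lemma histUpTo_length (ρ : ℕ → V) (n : ℕ) : (GG.histUpTo ρ n).length = n + 1 := by
  simp [GG.histUpTo]

lemma lastV_concat (g : Game V C A) (l : List V) (v : V) : g.lastV (l ++ [v]) = v := by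
  unfold Game.lastV
  rw [List.getLast?_concat]
  rfl

lemma lastV_histUpTo (g : Game V C A) (ρ : ℕ → V) (n : ℕ) :
    g.lastV (GG.histUpTo ρ n) = ρ n := by
  cases n with
  | zero => rw [histUpTo_zero]; unfold Game.lastV; simp
  | succ n => rw [histUpTo_succ, lastV_concat]

lemma playHist_succ (g : Game V C A) (prof : A → List V → V) (n : ℕ) :
    g.playHist prof (n + 1) =
      g.playHist prof n ++
        [prof (g.owner (g.lastV (g.playHist prof n))) (g.playHist prof n)] := rfl

lemma playHist_zero (g : Game V C A) (prof : A → List V → V) :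
    g.playHist prof 0 = [g.start] := rfl

lemma play_zero (g : Game V C A) (prof : A → List V → V) : g.play prof 0 = g.start := by
  show g.lastV (g.playHist prof 0) = g.start
  rw [playHist_zero]
  unfold Game.lastV
  simp

lemma play_succ (g : Game V C A) (prof : A → List V → V) (n : ℕ) :
    g.play prof (n + 1) =
      prof (g.owner (g.lastV (g.playHist prof n))) (g.playHist prof n) := by
  show g.lastV (g.playHist prof (n + 1)) = _
  rw [playHist_succ, lastV_concat]

lemma playHist_histUpTo (g : Game V C A) (prof : A → List V → V) (n : ℕ) :
    GG.histUpTo (g.play prof) n = g.playHist prof n := by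
  induction n with
  | zero =>
    rw [histUpTo_zero, play_zero, playHist_zero]
  | succ n ih =>
    rw [histUpTo_succ, ih, play_succ, playHist_succ]

lemma isHist_playHist (g : Game V C A) (prof : A → List V → V)
    (hval : ∀ a, g.ValidStrat a (prof a)) (n : ℕ) : g.IsHist (g.playHist prof n) := by
  induction n with
  | zero =>
    refine ⟨by simp [playHist_zero], ?_, ?_⟩
    · rw [playHist_zero]; rfl
    · rw [playHist_zero]; exact List.isChain_singleton _
  | succ n ih =>
    have hedge := hval (g.owner (g.lastV (g.playHist prof n))) _ ih rfl
    obtain ⟨hne, hhd, hch⟩ := ih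
    rw [playHist_succ]
    refine ⟨by simp, ?_, ?_⟩
    · rw [List.head?_append_of_ne_nil _ hne]
      exact hhd
    · show List.IsChain _ _
      rw [List.isChain_append]
      refine ⟨hch, List.isChain_singleton _, ?_⟩
      intro x hx y hy
      simp only [List.head?_cons, Option.mem_def, Option.some.injEq] at hy
      have hx' : g.lastV (g.playHist prof n) = x := by
        unfold Game.lastV
        rw [hx]
        rfl
      rw [← hy, ← hx']
      exact hedge

lemma isRun_play (g : Game V C A) (prof : A → List V → V)
    (hval : ∀ a, g.ValidStrat a (prof a)) : g.IsRun (g.play prof) := by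
  refine ⟨play_zero g prof, fun n => ?_⟩
  rw [play_succ]
  exact hval _ _ (isHist_playHist g prof hval n) rfl

lemma compat_play (g : Game V C A) (a : A) (s : List V → V) :
    g.Compat a s (g.play (fun _ => s)) := by
  intro n _
  rw [play_succ, playHist_histUpTo]

end GenericGame

namespace S10

open GG

section TheGame

variable {C : Type} (prec : (ℕ → C) → (ℕ → C) → Prop) (d : C) (h0 h1 h2 h3 : List C)
variable (hb : 0 < h1.length) (he : 0 < h3.length)

include hb he

local notation "a'" => h0.length
local notation "b'" => h1.length
local notation "c'" => h2.length
local notation "e'" => h3.length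
local notation "T'" => TT h0.length h1.length h2.length h3.length

def gmS : Game (Fin T') C Bool where
  edge v w := edgeN a' b' c' e' v.val w.val
  serial v := ⟨⟨nxtN a' b' c' e' v.val, nxt_lt hb he v.isLt⟩, edge_nxt v.isLt⟩
  start := ⟨0, by unfold TT; omega⟩
  owner _ := true
  color v := (fullL h0 h1 h2 h3).getD v.val d
  pref _ := prec

def runYF (k : ℕ) : ℕ → Fin T' := fun t => ⟨posY a' b' c' e' k t, posY_lt hb he t k⟩

def runZF : ℕ → Fin T' := fun t =>
  ⟨posZ a' b' t, lt_of_lt_of_le (posZ_lt hb t) (by have := he; unfold TT; omega)⟩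

lemma isRun_runYF {k : ℕ} (hk : 0 < k) :
    (gmS prec d h0 h1 h2 h3 hb he).IsRun (runYF h0 h1 h2 h3 hb he k) := by
  constructor
  · apply Fin.ext
    exact posY_zero (kbpos hb hk)
  · intro t
    show edgeN a' b' c' e' (posY a' b' c' e' k t) (posY a' b' c' e' k (t + 1))
    by_cases hex : t + 1 = a' + k * b'
    · have h1e : posY a' b' c' e' k t = a' + b' - 1 := by
        have ht : t = a' + k * b' - 1 := by omega
        rw [ht]
        exact posY_exit_pred hb hk
      have h2e : posY a' b' c' e' k (t + 1) = a' + b' := by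
        rw [hex]
        exact posY_exit
      rw [h1e, h2e]
      exact edge_exit hb he
    · rw [← nxt_posY hb he hk hex]
      exact edge_nxt (posY_lt hb he t k)

lemma isRun_runZF :
    (gmS prec d h0 h1 h2 h3 hb he).IsRun (runZF h0 h1 h2 h3 hb he) := by
  constructor
  · apply Fin.ext
    exact posZ_zero
  · intro t
    show edgeN a' b' c' e' (posZ a' b' t) (posZ a' b' (t + 1))
    rw [← nxt_posZ hb he]
    exact edge_nxt (lt_of_lt_of_le (posZ_lt hb t) (by unfold TT; omega))

lemma trace_runYF (k : ℕ) :
    (fun n => (gmS prec d h0 h1 h2 h3 hb he).color (runYF h0 h1 h2 h3 hb he k n)) =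
      GG.extWord d (h0 ++ GG.repW h1 k ++ h2) h3 :=
  funext fun n => traceY d h0 h1 h2 h3 hb he k n

lemma trace_runZF :
    (fun n => (gmS prec d h0 h1 h2 h3 hb he).color (runZF h0 h1 h2 h3 hb he n)) =
      GG.extWord d h0 h1 :=
  funext fun n => traceZ d h0 h1 h2 h3 hb n

def nxtF : Fin T' → Fin T' := fun v => ⟨nxtN a' b' c' e' v.val, nxt_lt hb he v.isLt⟩

def vC : Fin T' := ⟨a' + b' - 1, by have := hb; have := he; unfold TT; omega⟩

def vExit : Fin T' := ⟨a' + b', by have := hb; have := he; unfold TT; omega⟩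

def stratY (k : ℕ) : List (Fin T') → Fin T' := fun l =>
  if l.length = a' + k * b' ∧
      (gmS prec d h0 h1 h2 h3 hb he).lastV l = vC h0 h1 h2 h3 hb he then
    vExit h0 h1 h2 h3 hb he
  else nxtF h0 h1 h2 h3 hb he ((gmS prec d h0 h1 h2 h3 hb he).lastV l)

lemma valid_stratY (k : ℕ) :
    (gmS prec d h0 h1 h2 h3 hb he).ValidStrat true (stratY prec d h0 h1 h2 h3 hb he k) := by
  intro l _ _
  unfold stratY
  split
  · rename_i hcond
    rw [hcond.2]
    show edgeN a' b' c' e' (a' + b' - 1) (a' + b')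
    exact edge_exit hb he
  · exact edge_nxt ((gmS prec d h0 h1 h2 h3 hb he).lastV l).isLt

lemma compat_stratY {k : ℕ} (hk : 0 < k) (ρ : ℕ → Fin T')
    (h0' : ρ 0 = (gmS prec d h0 h1 h2 h3 hb he).start)
    (hc : ∀ t, ρ (t + 1) = stratY prec d h0 h1 h2 h3 hb he k (GG.histUpTo ρ t)) :
    ∀ t, ρ t = runYF h0 h1 h2 h3 hb he k t := by
  intro t
  induction t with
  | zero =>
    rw [h0']
    apply Fin.ext
    exact (posY_zero (kbpos hb hk)).symm
  | succ t ih =>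
    rw [hc t]
    unfold stratY
    rw [lastV_histUpTo, histUpTo_length, ih]
    by_cases hex : t + 1 = a' + k * b'
    · have hvc : runYF h0 h1 h2 h3 hb he k t = vC h0 h1 h2 h3 hb he := by
        apply Fin.ext
        show posY a' b' c' e' k t = a' + b' - 1
        have ht : t = a' + k * b' - 1 := by omega
        rw [ht, posY_exit_pred hb hk]
      rw [if_pos ⟨hex, hvc⟩]
      apply Fin.ext
      show (vExit h0 h1 h2 h3 hb he).val = posY a' b' c' e' k (t + 1)
      show a' + b' = posY a' b' c' e' k (t + 1)
      rw [hex, posY_exit]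
    · rw [if_neg (by intro hcond; exact hex hcond.1)]
      apply Fin.ext
      show nxtN a' b' c' e' (posY a' b' c' e' k t) = posY a' b' c' e' k (t + 1)
      exact nxt_posY hb he hk hex

lemma mem_bound {k m : ℕ} (hk : 0 < k) (s : List (Fin T') → Fin T')
    (hmem : GG.UsesMem m s) (ρ : ℕ → Fin T')
    (hcomp : ∀ t, ρ (t + 1) = s (GG.histUpTo ρ t))
    (hρ : ∀ t, ρ t = runYF h0 h1 h2 h3 hb he k t) : k ≤ 2 ^ m := by
  obtain ⟨σ, M0, hσ⟩ := hmem
  set step : (Fin m → Bool) → Fin T' → (Fin m → Bool) := fun M u => (σ (u, M)).2 with hstep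
  set Mem : ℕ → (Fin m → Bool) := fun t => ((List.range t).map ρ).foldl step M0 with hMem
  have hsplit : ∀ t, GG.histUpTo ρ t = (List.range t).map ρ ++ [ρ t] := by
    intro t
    unfold GG.histUpTo
    rw [List.range_succ, List.map_append]
    rfl
  have h1' : ∀ t, ρ (t + 1) = (σ (ρ t, Mem t)).1 := by
    intro t
    rw [hcomp t, hsplit t, hσ]
  have h2' : ∀ t, Mem (t + 1) = (σ (ρ t, Mem t)).2 := by
    intro t
    show ((List.range (t + 1)).map ρ).foldl step M0 = _
    rw [List.range_succ, List.map_append, List.foldl_append]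
    rfl
  set St : ℕ → Fin T' × (Fin m → Bool) := fun t => (ρ t, Mem t) with hSt
  have hstep' : ∀ t, St (t + 1) = σ (St t) := by
    intro t
    show (ρ (t + 1), Mem (t + 1)) = σ (ρ t, Mem t)
    rw [h1' t, h2' t]
  have hshift : ∀ i j, St i = St j → ∀ u, St (i + u) = St (j + u) := by
    intro i j hij u
    induction u with
    | zero => exact hij
    | succ u ih =>
      have e1 : i + (u + 1) = (i + u) + 1 := rfl
      have e2 : j + (u + 1) = (j + u) + 1 := rfl
      rw [e1, e2, hstep' (i + u), hstep' (j + u), ih]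
  by_contra hK
  push_neg at hK
  -- pigeonhole on the memory at loop visits
  have hcard : Fintype.card (Fin m → Bool) < Fintype.card (Fin (2 ^ m + 1)) := by
    simp only [Fintype.card_fun, Fintype.card_fin, Fintype.card_bool]
    omega
  obtain ⟨i, j, hij, hfeq⟩ :=
    Fintype.exists_ne_map_eq_of_card_lt
      (fun i : Fin (2 ^ m + 1) => Mem (a' + i.val * b' + (b' - 1))) hcard
  have hvis : ∀ n : ℕ, n < k → ρ (a' + n * b' + (b' - 1)) = vC h0 h1 h2 h3 hb he := by
    intro n hn
    rw [hρ]
    apply Fin.ext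
    show posY a' b' c' e' k (a' + n * b' + (b' - 1)) = a' + b' - 1
    exact posY_visit hb hn
  have main : ∀ i j : Fin (2 ^ m + 1), i.val < j.val →
      Mem (a' + i.val * b' + (b' - 1)) = Mem (a' + j.val * b' + (b' - 1)) → False := by
    intro i j hlt hfeq
    have hik : i.val < k := by omega
    have hjk : j.val < k := by omega
    have hSeq : St (a' + i.val * b' + (b' - 1)) = St (a' + j.val * b' + (b' - 1)) := by
      show (_, _) = (_, _)
      rw [hvis i.val hik, hvis j.val hjk, hfeq]
    set τi := a' + i.val * b' + (b' - 1) with hτi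
    set p := (j.val - i.val) * b' with hp
    have hppos : 0 < p := by
      have : 1 * 1 ≤ (j.val - i.val) * b' := Nat.mul_le_mul (by omega) hb
      omega
    have hτj : a' + j.val * b' + (b' - 1) = τi + p := by
      have hsub : (j.val - i.val) * b' = j.val * b' - i.val * b' := Nat.sub_mul _ _ _
      have hle : i.val * b' ≤ j.val * b' := Nat.mul_le_mul_right _ (by omega)
      omega
    rw [hτj] at hSeq
    have hper : ∀ n, ρ (τi + n * p) = ρ τi := by
      intro n
      induction n with
      | zero => rw [Nat.zero_mul, Nat.add_zero]
      | succ n ih =>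
        have harr : τi + (n + 1) * p = (τi + p) + n * p := by
          have : (n + 1) * p = n * p + p := Nat.succ_mul _ _
          omega
        have hre : ρ (τi + n * p) = ρ ((τi + p) + n * p) :=
          congrArg Prod.fst (hshift τi (τi + p) hSeq (n * p))
        rw [harr, ← hre]
        exact ih
    have hbig := hper (a' + k * b')
    have hge : a' + k * b' ≤ τi + (a' + k * b') * p := by
      have : (a' + k * b') * 1 ≤ (a' + k * b') * p := Nat.mul_le_mul_left _ hppos
      omega
    have hv1 : (ρ (τi + (a' + k * b') * p)).val = posY a' b' c' e' k (τi + (a' + k * b') * p) := by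
      rw [hρ]
      rfl
    have hv2 := posY_tail_ge (a := a') (b := b') (c := c') (e := e') (k := k) hge
    have hv3 : (ρ τi).val = a' + b' - 1 := by
      rw [hvis i.val hik]
      rfl
    have hvh := congrArg Fin.val hbig
    omega
  rcases Nat.lt_or_ge i.val j.val with hlt | hge0
  · exact main i j hlt hfeq
  · have hlt : j.val < i.val := by
      have : i.val ≠ j.val := fun h => hij (Fin.ext h)
      omega
    exact main j i hlt hfeq.symm

end TheGame

end S10


/-- Lemma 4.5: if a preference is not regular-Mont, then there is a one-player
game where the player does not win her winnable (strict and non-strict)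
threshold games with uniformly finite memory. -/
theorem stmt10
    {C : Type}
    (prec : (ℕ → C) → (ℕ → C) → Prop) (hswo : GG.SWO prec)
    (hnm : ¬ GG.RegularMont prec) :
    ∃ (V : Type) (_ : Fintype V) (g : GG.Game V C Bool),
      (∀ v, g.owner v = true) ∧ g.pref true = prec ∧
      ∀ m : ℕ,
        (∃ ρ, g.IsRun ρ ∧ (∃ s, g.Wins1 true ρ s) ∧
          ¬ ∃ s, g.Wins1 true ρ s ∧ GG.UsesMem m s) ∧
        (∃ ρ, g.IsRun ρ ∧ (∃ s, g.Wins1NS true ρ s) ∧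
          ¬ ∃ s, g.Wins1NS true ρ s ∧ GG.UsesMem m s) := by
  classical
  unfold GG.RegularMont at hnm
  push_neg at hnm
  obtain ⟨d, h0, h1, h2, h3, hb0, he0, hch, hlim⟩ := hnm
  have hb : 0 < h1.length := List.length_pos_iff.mpr hb0
  have he : 0 < h3.length := List.length_pos_iff.mpr he0
  obtain ⟨hirr, htrans, hinc⟩ := hswo
  set g := S10.gmS prec d h0 h1 h2 h3 hb he with hg
  set x : ℕ → (ℕ → C) := fun n => GG.extWord d (h0 ++ GG.repW h1 n ++ h2) h3 with hx
  set z : (ℕ → C) := GG.extWord d h0 h1 with hz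
  have hxz : x 0 = GG.extWord d (h0 ++ h2) h3 := by
    rw [hx]
    simp only [S10.repW_zero, List.append_nil]
  have hchain : ∀ i j, i < j → prec (x i) (x j) := by
    intro i j hij
    obtain ⟨t, rfl⟩ : ∃ t, j = i + 1 + t := ⟨j - i - 1, by omega⟩
    clear hij
    induction t with
    | zero => exact hch i
    | succ t ih =>
      have harr : i + 1 + (t + 1) = (i + 1 + t) + 1 := by omega
      rw [harr]
      exact htrans _ _ _ ih (hch (i + 1 + t))
  have hx0N : ∀ n, 0 < n → prec (x 0) (x n) := fun n hn => hchain 0 n hn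
  have hlim' : ¬ prec (x 0) z := by
    rw [hxz]
    exact hlim
  have hNz : ∀ n, ¬ prec (x n) z := by
    intro n hpn
    rcases Nat.eq_zero_or_pos n with rfl | hn
    · exact hlim' hpn
    · exact hlim' (htrans _ _ _ (hx0N n hn) hpn)
  have hzN : ∀ n, 0 < n → prec z (x n) := by
    intro n hn
    by_contra hno
    exact hinc _ _ _ hlim' hno (hx0N n hn)
  refine ⟨Fin (S10.TT h0.length h1.length h2.length h3.length), inferInstance, g,
    fun v => rfl, rfl, ?_⟩
  -- common tools
  have hval_all : ∀ s, g.ValidStrat true s → ∀ aa : Bool, g.ValidStrat aa ((fun _ => s) aa) := by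
    intro s hv aa
    cases aa
    · intro l hl hown
      have hcf : (true : Bool) = false := hown
      exact Bool.noConfusion hcf
    · exact hv
  have htrZ : ∀ ρ' : ℕ → Fin (S10.TT h0.length h1.length h2.length h3.length),
      (∀ t, ρ' t = S10.runZF h0 h1 h2 h3 hb he t) →
      (fun n => g.color (ρ' n)) = z := by
    intro ρ' hρ'
    funext n
    rw [hρ' n]
    exact S10.traceZ d h0 h1 h2 h3 hb n
  have htrY : ∀ (k : ℕ) (ρ' : ℕ → Fin (S10.TT h0.length h1.length h2.length h3.length)),
      (∀ t, ρ' t = S10.runYF h0 h1 h2 h3 hb he k t) →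
      (fun n => g.color (ρ' n)) = x k := by
    intro k ρ' hρ'
    funext n
    rw [hρ' n]
    exact S10.traceY d h0 h1 h2 h3 hb he k n
  have hclassify : ∀ s, g.ValidStrat true s →
      ∃ ρ', g.IsRun ρ' ∧ g.Compat true s ρ' ∧
        ((∀ t, ρ' t = S10.runZF h0 h1 h2 h3 hb he t) ∨
          ∃ k, 0 < k ∧ ∀ t, ρ' t = S10.runYF h0 h1 h2 h3 hb he k t) := by
    intro s hv
    set ρ' := g.play (fun _ => s) with hρ'def
    have hrun : g.IsRun ρ' := isRun_play g _ (hval_all s hv)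
    have hcompat : g.Compat true s ρ' := compat_play g true s
    refine ⟨ρ', hrun, hcompat, ?_⟩
    have hcl := S10.run_classify hb he (fun t => (ρ' t).val)
      (by exact congrArg Fin.val hrun.1) (fun t => hrun.2 t)
    rcases hcl with hcl | ⟨k, hk, hcl⟩
    · left
      intro t
      exact Fin.ext (hcl t)
    · right
      exact ⟨k, hk, fun t => Fin.ext (hcl t)⟩
  have huniq : ∀ (k : ℕ), 0 < k → ∀ ρ', g.IsRun ρ' →
      g.Compat true (S10.stratY prec d h0 h1 h2 h3 hb he k) ρ' →
      (fun n => g.color (ρ' n)) = x k := by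
    intro k hk ρ' hrun hcompat
    have hcc := S10.compat_stratY prec d h0 h1 h2 h3 hb he hk ρ' hrun.1
      (fun t => hcompat t rfl)
    exact htrY k ρ' hcc
  intro m
  constructor
  · -- strict threshold game
    refine ⟨S10.runYF h0 h1 h2 h3 hb he (2 ^ m + 1),
      S10.isRun_runYF prec d h0 h1 h2 h3 hb he (Nat.succ_pos _), ⟨?_, ?_⟩⟩
    · refine ⟨S10.stratY prec d h0 h1 h2 h3 hb he (2 ^ m + 2),
        S10.valid_stratY prec d h0 h1 h2 h3 hb he (2 ^ m + 2), ?_⟩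
      intro ρ' hr hcm
      have htr := huniq (2 ^ m + 2) (Nat.succ_pos _) ρ' hr hcm
      show g.pref true (fun n => g.color (S10.runYF h0 h1 h2 h3 hb he (2 ^ m + 1) n))
        (fun n => g.color (ρ' n))
      rw [htr, htrY (2 ^ m + 1) (S10.runYF h0 h1 h2 h3 hb he (2 ^ m + 1)) (fun t => rfl)]
      exact hchain (2 ^ m + 1) (2 ^ m + 2) (Nat.lt_succ_self _)
    · rintro ⟨s, ⟨hval, hwin⟩, hmem⟩
      obtain ⟨ρ', hrun, hcompat, hcl⟩ := hclassify s hval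
      have hwon : g.pref true (fun n => g.color (S10.runYF h0 h1 h2 h3 hb he (2 ^ m + 1) n))
          (fun n => g.color (ρ' n)) := hwin ρ' hrun hcompat
      rw [htrY (2 ^ m + 1) (S10.runYF h0 h1 h2 h3 hb he (2 ^ m + 1)) (fun t => rfl)] at hwon
      rcases hcl with hzc | ⟨k, hk, hyc⟩
      · rw [htrZ ρ' hzc] at hwon
        exact hNz (2 ^ m + 1) hwon
      · have hkb : k ≤ 2 ^ m :=
          S10.mem_bound h0 h1 h2 h3 hb he hk s hmem ρ' (fun t => hcompat t rfl) hyc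
        rw [htrY k ρ' hyc] at hwon
        exact hirr (x k) (htrans _ _ _ (hchain k (2 ^ m + 1) (Nat.lt_succ_of_le hkb)) hwon)
  · -- non-strict threshold game
    refine ⟨S10.runYF h0 h1 h2 h3 hb he (2 ^ m + 1),
      S10.isRun_runYF prec d h0 h1 h2 h3 hb he (Nat.succ_pos _), ⟨?_, ?_⟩⟩
    · refine ⟨S10.stratY prec d h0 h1 h2 h3 hb he (2 ^ m + 1),
        S10.valid_stratY prec d h0 h1 h2 h3 hb he (2 ^ m + 1), ?_⟩
      intro ρ' hr hcm hbad
      have htr := huniq (2 ^ m + 1) (Nat.succ_pos _) ρ' hr hcm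
      have hbad' : g.pref true (fun n => g.color (ρ' n))
          (fun n => g.color (S10.runYF h0 h1 h2 h3 hb he (2 ^ m + 1) n)) := hbad
      rw [htr, htrY (2 ^ m + 1) (S10.runYF h0 h1 h2 h3 hb he (2 ^ m + 1)) (fun t => rfl)]
        at hbad'
      exact hirr (x (2 ^ m + 1)) hbad'
    · rintro ⟨s, ⟨hval, hwin⟩, hmem⟩
      obtain ⟨ρ', hrun, hcompat, hcl⟩ := hclassify s hval
      have hwon := hwin ρ' hrun hcompat
      have hwon' : ¬ g.pref true (fun n => g.color (ρ' n))
          (fun n => g.color (S10.runYF h0 h1 h2 h3 hb he (2 ^ m + 1) n)) := hwon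
      rw [htrY (2 ^ m + 1) (S10.runYF h0 h1 h2 h3 hb he (2 ^ m + 1)) (fun t => rfl)] at hwon'
      rcases hcl with hzc | ⟨k, hk, hyc⟩
      · rw [htrZ ρ' hzc] at hwon'
        exact hwon' (hzN (2 ^ m + 1) (Nat.succ_pos _))
      · have hkb : k ≤ 2 ^ m :=
          S10.mem_bound h0 h1 h2 h3 hb he hk s hmem ρ' (fun t => hcompat t rfl) hyc
        rw [htrY k ρ' hyc] at hwon'
        exact hwon' (hchain k (2 ^ m + 1) (Nat.lt_succ_of_le hkb))
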